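/- Let E be a real inner product space, let f_1,…,f_n : E → ℝ be differentiable with P(w) = (1/n) ∑_{i=1}^n f_i(w), and let {1,…,n} be partitioned into p disjoint blocks D_1,…,D_p each of size q (n = pq), with local objectives F_k(w) = (1/q) ∑_{i∈D_k} f_i(w). Assume: each ∇f_i is L-Lipschitz; each F_k is μ-strongly convex (so F_k(a) ≥ F_k(b) + ⟪∇F_k(b), a−b⟫ + (μ/2)‖a−b‖²) with μ > 0; w* minimizes P (so P(w) ≥ P(w*) for all w and ∇P(w*) = 0); c > L − μ with c > 0; and 0 < η ≤ (μ + c − L)/(3(L² + c²)). Let w_t ∈ E, z = ∇P(w_t), and for u ∈ E and i ∈ D_k define v_{k,i}(u) = ∇f_i(u) − ∇f_i(w_t) + z + c(u − w_t). Then for any points u_1,…,u_p ∈ E: (1/p) ∑_{k=1}^p (1/q) ∑_{i∈D_k} ‖u_k − η·v_{k,i}(u_k) − w*‖² ≤ (1 − η(2μ + c)) · (1/p) ∑_{k=1}^p ‖u_k − w*‖² + (cη + 3L²η²) · ‖w_t − w*‖². -/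

import Mathlib

open scoped InnerProductSpace
open Finset Set

section AuxScope
variable {E : Type*} [NormedAddCommGroup E] [InnerProductSpace ℝ E] [CompleteSpace E]

private lemma inner_gradient_eq (φ : E → ℝ) (x v : E) :
    ⟪gradient φ x, v⟫_ℝ = fderiv ℝ φ x v := by
  simp [gradient, InnerProductSpace.toDual_symm_apply]

private lemma hasGradientAt_const_mul_sum {ι : Type*} (s : Finset ι) (g : ι → E → ℝ) (x : E)
    (hg : ∀ i, Differentiable ℝ (g i)) (a : ℝ) :
    HasGradientAt (fun w => a * ∑ i ∈ s, g i w) (a • ∑ i ∈ s, gradient (g i) x) x := by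
  have h1 : HasFDerivAt (fun w => ∑ i ∈ s, g i w) (∑ i ∈ s, fderiv ℝ (g i) x) x :=
    HasFDerivAt.fun_sum (fun i _ => (hg i x).hasFDerivAt)
  have h2 := h1.const_mul a
  rw [hasGradientAt_iff_hasFDerivAt]
  convert h2 using 1
  case e'_9 => rfl
  rw [map_smul, map_sum]
  congr 1
  refine Finset.sum_congr rfl (fun i _ => ?_)
  exact (InnerProductSpace.toDual ℝ E).apply_symm_apply _

private lemma descent_lemma {φ : E → ℝ} (hφ : Differentiable ℝ φ) {L : ℝ}
    (hlip : ∀ a b : E, ‖gradient φ a - gradient φ b‖ ≤ L * ‖a - b‖) (x y : E) :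
    φ y ≤ φ x + ⟪gradient φ x, y - x⟫_ℝ + L / 2 * ‖y - x‖ ^ 2 := by
  set v := y - x with hv
  set ψ : ℝ → ℝ := fun t => φ (x + t • v) - t * ⟪gradient φ x, v⟫_ℝ - t ^ 2 * (L / 2 * ‖v‖ ^ 2)
    with hψ
  have hcurve : ∀ t : ℝ, HasDerivAt (fun t : ℝ => x + t • v) v t := by
    intro t
    simpa using ((hasDerivAt_id t).smul_const v).const_add x
  have hψd : ∀ t : ℝ, HasDerivAt ψ
      (⟪gradient φ (x + t • v), v⟫_ℝ - ⟪gradient φ x, v⟫_ℝ - 2 * t * (L / 2 * ‖v‖ ^ 2)) t := by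
    intro t
    have h1 : HasDerivAt (fun t : ℝ => φ (x + t • v)) (fderiv ℝ φ (x + t • v) v) t :=
      (hφ (x + t • v)).hasFDerivAt.comp_hasDerivAt t (hcurve t)
    rw [← inner_gradient_eq] at h1
    have h2 : HasDerivAt (fun t : ℝ => t * ⟪gradient φ x, v⟫_ℝ) (⟪gradient φ x, v⟫_ℝ) t :=
      hasDerivAt_mul_const _
    have h3 : HasDerivAt (fun t : ℝ => t ^ 2 * (L / 2 * ‖v‖ ^ 2))
        (2 * t * (L / 2 * ‖v‖ ^ 2)) t := by
      simpa using (hasDerivAt_pow 2 t).mul_const (L / 2 * ‖v‖ ^ 2)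
    exact (h1.sub h2).sub h3
  have hmono : AntitoneOn ψ (Icc (0:ℝ) 1) := by
    apply antitoneOn_of_deriv_nonpos (convex_Icc 0 1)
    · have : Differentiable ℝ ψ := fun t => (hψd t).differentiableAt
      exact this.continuous.continuousOn
    · intro t _
      exact (hψd t).differentiableAt.differentiableWithinAt
    · intro t ht
      rw [interior_Icc] at ht
      rw [(hψd t).deriv]
      have hb : ⟪gradient φ (x + t • v) - gradient φ x, v⟫_ℝ ≤ L * t * ‖v‖ ^ 2 := by
        calc ⟪gradient φ (x + t • v) - gradient φ x, v⟫_ℝ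
            ≤ ‖gradient φ (x + t • v) - gradient φ x‖ * ‖v‖ := real_inner_le_norm _ _
          _ ≤ (L * ‖(x + t • v) - x‖) * ‖v‖ := by gcongr; exact hlip _ _
          _ = L * t * ‖v‖ ^ 2 := by
              rw [add_sub_cancel_left, norm_smul, Real.norm_eq_abs, abs_of_pos ht.1]
              ring
      rw [inner_sub_left] at hb
      nlinarith [ht.1.le]
  have h01 := hmono (left_mem_Icc.2 zero_le_one) (right_mem_Icc.2 zero_le_one) zero_le_one
  have hψ0 : ψ 0 = φ x := by simp [hψ]
  have hψ1 : ψ 1 = φ y - ⟪gradient φ x, v⟫_ℝ - L / 2 * ‖v‖ ^ 2 := by simp [hψ, hv]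
  rw [hψ0, hψ1] at h01
  linarith

private lemma sum_partition {n p : ℕ} (D : Fin p → Finset (Fin n))
    (hdisj : ∀ k l, k ≠ l → Disjoint (D k) (D l)) (hcover : ∀ i, ∃ k, i ∈ D k)
    {M : Type*} [AddCommMonoid M] (h : Fin n → M) :
    ∑ i, h i = ∑ k, ∑ i ∈ D k, h i := by
  have huniv : (Finset.univ : Finset (Fin n)) = Finset.univ.biUnion D := by
    ext i; simpa using hcover i
  rw [huniv, Finset.sum_biUnion]
  exact fun k _ l _ hkl => hdisj k l hkl

end AuxScope

set_option maxHeartbeats 2000000 in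
/-- deterministic one-step form of Lemma 1 of SCOPE. -/
theorem scope_lemma1_one_step
    {E : Type*} [NormedAddCommGroup E] [InnerProductSpace ℝ E] [CompleteSpace E]
    (n p q : ℕ) (hn : n = p * q) (hp : 0 < p) (hq : 0 < q)
    (f : Fin n → E → ℝ) (hf : ∀ i, Differentiable ℝ (f i))
    (D : Fin p → Finset (Fin n))
    (hdisj : ∀ k l : Fin p, k ≠ l → Disjoint (D k) (D l))
    (hcard : ∀ k, (D k).card = q)
    (hcover : ∀ i : Fin n, ∃ k, i ∈ D k)
    (P : E → ℝ) (hP : P = fun w => (1 / n : ℝ) * ∑ i, f i w)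
    (F : Fin p → E → ℝ)
    (hF : ∀ k, F k = fun w => (1 / q : ℝ) * ∑ i ∈ D k, f i w)
    (L μ c η : ℝ)
    (hL : ∀ i, ∀ a b : E, ‖gradient (f i) a - gradient (f i) b‖ ≤ L * ‖a - b‖)
    (hμ : 0 < μ)
    (hsc : ∀ k, ∀ a b : E,
      F k a ≥ F k b + ⟪gradient (F k) b, a - b⟫_ℝ + (μ / 2) * ‖a - b‖ ^ 2)
    (wstar : E) (hmin : ∀ w, P wstar ≤ P w) (hstar : gradient P wstar = 0)
    (hc0 : 0 < c) (hcL : c > L - μ)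
    (hη0 : 0 < η) (hη : η ≤ (μ + c - L) / (3 * (L ^ 2 + c ^ 2)))
    (wt z : E) (hz : z = gradient P wt)
    (u : Fin p → E) :
    (1 / p : ℝ) * ∑ k, (1 / q : ℝ) * ∑ i ∈ D k,
        ‖u k - η • (gradient (f i) (u k) - gradient (f i) wt + z
            + c • (u k - wt)) - wstar‖ ^ 2
      ≤ (1 - η * (2 * μ + c)) * ((1 / p : ℝ) * ∑ k, ‖u k - wstar‖ ^ 2)
        + (c * η + 3 * L ^ 2 * η ^ 2) * ‖wt - wstar‖ ^ 2 := by
  -- trivial case: subsingleton space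
  rcases subsingleton_or_nontrivial E with hE | hE
  · have h0 : ∀ x : E, ‖x‖ = 0 := fun x => by rw [Subsingleton.elim x 0, norm_zero]
    simp only [h0]
    simp
  -- casts and positivity
  have hp' : (0:ℝ) < p := by exact_mod_cast hp
  have hq' : (0:ℝ) < q := by exact_mod_cast hq
  have hnpq : (n:ℝ) = (p:ℝ) * (q:ℝ) := by exact_mod_cast congrArg (Nat.cast (R := ℝ)) hn
  have hn' : (0:ℝ) < n := by rw [hnpq]; positivity
  -- gradient formulas
  have hgradF : ∀ k x, gradient (F k) x = (1/q : ℝ) • ∑ i ∈ D k, gradient (f i) x := by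
    intro k x
    rw [hF k]
    exact (hasGradientAt_const_mul_sum (D k) f x hf (1/q : ℝ)).gradient
  have hgradP : ∀ x, gradient P x = (1/n : ℝ) • ∑ i, gradient (f i) x := by
    intro x
    rw [hP]
    exact (hasGradientAt_const_mul_sum Finset.univ f x hf (1/n : ℝ)).gradient
  -- Lipschitz gradient of P
  have hPlip : ∀ x y : E, ‖gradient P x - gradient P y‖ ≤ L * ‖x - y‖ := by
    intro x y
    rw [hgradP, hgradP, ← smul_sub, ← Finset.sum_sub_distrib, norm_smul]
    have h1 : ‖∑ i, (gradient (f i) x - gradient (f i) y)‖ ≤ (n:ℝ) * (L * ‖x - y‖) := by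
      calc ‖∑ i, (gradient (f i) x - gradient (f i) y)‖
          ≤ ∑ i, ‖gradient (f i) x - gradient (f i) y‖ := norm_sum_le _ _
        _ ≤ ∑ _i : Fin n, L * ‖x - y‖ := Finset.sum_le_sum (fun i _ => hL i x y)
        _ = (n:ℝ) * (L * ‖x - y‖) := by
            rw [Finset.sum_const, Finset.card_univ, Fintype.card_fin, nsmul_eq_mul]
    have h2 : ‖(1/n : ℝ)‖ = 1/(n:ℝ) := by
      rw [Real.norm_eq_abs, abs_of_pos (by positivity)]
    rw [h2]
    calc 1/(n:ℝ) * ‖∑ i, (gradient (f i) x - gradient (f i) y)‖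
        ≤ 1/(n:ℝ) * ((n:ℝ) * (L * ‖x - y‖)) := by
          apply mul_le_mul_of_nonneg_left h1 (by positivity)
      _ = L * ‖x - y‖ := by field_simp
  -- sums of F over blocks
  have hFsum : ∀ x, ∑ k, F k x = (p:ℝ) * P x := by
    intro x
    rw [hP]
    have : ∀ k, F k x = (1/q : ℝ) * ∑ i ∈ D k, f i x := fun k => by rw [hF k]
    rw [Finset.sum_congr rfl (fun k _ => this k), ← Finset.mul_sum,
      ← sum_partition D hdisj hcover (fun i => f i x)]
    field_simp
    rw [hnpq]
    ring
  have hgradFsum : ∀ x, ∑ k, gradient (F k) x = (p:ℝ) • gradient P x := by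
    intro x
    rw [hgradP]
    rw [Finset.sum_congr rfl (fun k _ => hgradF k x), ← Finset.smul_sum,
      ← sum_partition D hdisj hcover (fun i => gradient (f i) x)]
    rw [smul_smul]
    congr 1
    rw [hnpq]
    field_simp
  -- strong convexity of P
  have hscP : ∀ a b : E, P b + ⟪gradient P b, a - b⟫_ℝ + (μ/2) * ‖a - b‖ ^ 2 ≤ P a := by
    intro a b
    have hsum := Finset.sum_le_sum (fun k (_ : k ∈ Finset.univ) => (hsc k a b))
    rw [Finset.sum_add_distrib, Finset.sum_add_distrib, hFsum, hFsum, Finset.sum_const,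
      Finset.card_univ, Fintype.card_fin, nsmul_eq_mul] at hsum
    have hin : ∑ k, ⟪gradient (F k) b, a - b⟫_ℝ = (p:ℝ) * ⟪gradient P b, a - b⟫_ℝ := by
      rw [← sum_inner, hgradFsum, real_inner_smul_left]
    rw [hin] at hsum
    nlinarith [hsum, hp']
  -- μ ≤ L via a nonzero vector
  obtain ⟨v0, hv0⟩ := exists_ne (0 : E)
  have hv0n : 0 < ‖v0‖ := norm_pos_iff.2 hv0
  have hμL : μ ≤ L := by
    have h1 := hscP v0 0
    have h2 := hscP 0 v0
    have e1 : v0 - 0 = v0 := sub_zero v0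
    have e2 : (0:E) - v0 = -v0 := zero_sub v0
    rw [e1] at h1
    rw [e2] at h2
    rw [inner_neg_right] at h2
    have hnn : ‖(-v0 : E)‖ = ‖v0‖ := norm_neg v0
    rw [hnn] at h2
    have hcs : ⟪gradient P v0, v0⟫_ℝ - ⟪gradient P 0, v0⟫_ℝ ≤ L * ‖v0‖ * ‖v0‖ := by
      have := real_inner_le_norm (gradient P v0 - gradient P 0) v0
      rw [inner_sub_left] at this
      have hlip := hPlip v0 0
      rw [sub_zero] at hlip
      nlinarith [norm_nonneg v0]
    nlinarith [hv0n, mul_pos hv0n hv0n, hcs, h1, h2]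
  have hL0 : (0:ℝ) < L := lt_of_lt_of_le hμ hμL
  -- main geometric quantities
  set d : E := wt - wstar with hd
  set zb : E := z - μ • d with hzb
  set ρ : ℝ := 2 * (P wt - P wstar) - μ * ‖d‖ ^ 2 with hρ
  set s : ℝ := L - μ with hsdef
  have hs0 : 0 ≤ s := by simp [hsdef]; linarith
  have hρ0 : 0 ≤ ρ := by
    have h1 := hscP wt wstar
    rw [hstar, inner_zero_left] at h1
    simp only [hρ]
    rw [hd]
    linarith
  have hPdiff : Differentiable ℝ P := by
    rw [hP]
    exact Differentiable.const_mul (Differentiable.fun_sum (fun i _ => hf i)) _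
  have hznorm : ‖z‖ ≤ L * ‖d‖ := by
    have := hPlip wt wstar
    rw [hstar, sub_zero, ← hd, ← hz] at this
    exact this
  -- co-coercivity: ‖zb‖² ≤ s * ρ
  have hkey_t : ∀ t : ℝ, 0 ≤ t → t * ‖zb‖ ^ 2 ≤ ρ/2 + s/2 * t^2 * ‖zb‖ ^ 2 := by
    intro t ht
    have hdesc := descent_lemma hPdiff hPlip wt (wt - t • zb)
    have e1 : wt - t • zb - wt = -(t • zb) := by abel
    rw [e1, inner_neg_right, ← hz] at hdesc
    have e2 : ⟪z, t • zb⟫_ℝ = t * (‖zb‖^2 + μ * ⟪d, zb⟫_ℝ) := by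
      rw [real_inner_smul_right]
      have : z = zb + μ • d := by rw [hzb]; abel
      rw [this, inner_add_left, real_inner_smul_left, real_inner_self_eq_norm_sq,
        real_inner_comm]
    have e3 : ‖-(t • zb)‖^2 = t^2 * ‖zb‖^2 := by
      rw [norm_neg, norm_smul, Real.norm_eq_abs, mul_pow, sq_abs]
    rw [e2, e3] at hdesc
    have hssc := hscP (wt - t • zb) wstar
    rw [hstar, inner_zero_left] at hssc
    have e4 : wt - t • zb - wstar = d - t • zb := by rw [hd]; abel
    rw [e4] at hssc
    have e5 : ‖d - t • zb‖^2 = ‖d‖^2 - 2 * (t * ⟪d, zb⟫_ℝ) + t^2 * ‖zb‖^2 := by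
      rw [norm_sub_sq_real, real_inner_smul_right, norm_smul, Real.norm_eq_abs, mul_pow, sq_abs]
    rw [e5] at hssc
    simp only [hρ, hsdef]
    linarith [hdesc, hssc]
  have hcoco : ‖zb‖^2 ≤ s * ρ := by
    rcases eq_or_lt_of_le hs0 with hs' | hs'
    · have hz0 : ‖zb‖^2 ≤ 0 := by
        by_contra hcon
        push_neg at hcon
        have hT0 : (0:ℝ) ≤ (ρ/2 + 1)/‖zb‖^2 := by
          apply div_nonneg (by linarith) (le_of_lt hcon)
        have ht := hkey_t ((ρ/2 + 1)/‖zb‖^2) hT0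
        have hTz : (ρ/2 + 1)/‖zb‖^2 * ‖zb‖^2 = ρ/2 + 1 :=
          div_mul_cancel₀ _ (ne_of_gt hcon)
        rw [← hs'] at ht
        norm_num at ht
        linarith [ht, hTz]
      nlinarith [sq_nonneg ‖zb‖, mul_nonneg hs0 hρ0]
    · have ht := hkey_t (1/s) (by positivity)
      have hss : (1/s) * ‖zb‖^2 ≤ ρ/2 + 1/(2*s) * ‖zb‖^2 := by
        have : s/2 * (1/s)^2 = 1/(2*s) := by field_simp
        nlinarith [ht, this]
      have h2 : (1/(2*s)) * ‖zb‖^2 ≤ ρ/2 := by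
        have e : (1/s : ℝ) = 1/(2*s) + 1/(2*s) := by field_simp; ring
        nlinarith [hss]
      calc ‖zb‖^2 = (2*s) * ((1/(2*s)) * ‖zb‖^2) := by field_simp
        _ ≤ (2*s) * (ρ/2) := by apply mul_le_mul_of_nonneg_left h2 (by positivity)
        _ = s * ρ := by ring
  -- per-k inequality
  have hkey : ∀ k : Fin p,
      (1 / q : ℝ) * ∑ i ∈ D k, ‖u k - η • (gradient (f i) (u k) - gradient (f i) wt + z
          + c • (u k - wt)) - wstar‖ ^ 2
      ≤ (1 - η * (2 * μ + c)) * ‖u k - wstar‖ ^ 2 + (c * η + 3 * L ^ 2 * η ^ 2) * ‖d‖ ^ 2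
        - η * ((s * ‖u k - wt‖ ^ 2 + 2 * ⟪zb, u k - wt⟫_ℝ
              + (2 * (F k wt - F k wstar) - μ * ‖d‖ ^ 2))
            + 2 * ⟪z - gradient (F k) wt, d⟫_ℝ) := by
    intro k
    set a : E := u k - wstar with ha
    set e : E := u k - wt with he
    set Vk : E := gradient (F k) (u k) - gradient (F k) wt + z + c • e with hVk
    have hqq : (q:ℝ) * (1/q:ℝ) = 1 := mul_one_div_cancel (ne_of_gt hq')
    have hq_smul : ∀ (X : E), (q:ℝ) • ((1/q:ℝ) • X) = X := fun X => by
      rw [smul_smul, hqq, one_smul]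
    -- sum of the update directions
    have hVsum : ∑ i ∈ D k, (gradient (f i) (u k) - gradient (f i) wt + z + c • e)
        = (q:ℝ) • Vk := by
      have h1 : ∑ i ∈ D k, (gradient (f i) (u k) - gradient (f i) wt + z + c • e)
          = ((∑ i ∈ D k, gradient (f i) (u k)) - (∑ i ∈ D k, gradient (f i) wt)
            + (q:ℝ) • z) + (q:ℝ) • (c • e) := by
        rw [Finset.sum_add_distrib, Finset.sum_add_distrib, Finset.sum_sub_distrib,
          Finset.sum_const, Finset.sum_const, hcard k, Nat.cast_smul_eq_nsmul ℝ,
          Nat.cast_smul_eq_nsmul ℝ]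
      have h2 : (q:ℝ) • Vk = ((∑ i ∈ D k, gradient (f i) (u k))
            - (∑ i ∈ D k, gradient (f i) wt) + (q:ℝ) • z) + (q:ℝ) • (c • e) := by
        rw [hVk, hgradF, hgradF, smul_add, smul_add, smul_sub, hq_smul, hq_smul]
      rw [h1, h2]
    have hsum_inner : ∑ i ∈ D k,
        ⟪gradient (f i) (u k) - gradient (f i) wt + z + c • e, a⟫_ℝ
        = (q:ℝ) * ⟪Vk, a⟫_ℝ := by
      rw [← sum_inner, hVsum, real_inner_smul_left]
    -- geometry identities
    have ha_ed : e + d = a := by rw [he, hd, ha]; abel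
    have had : a - d = e := by rw [ha, hd, he]; abel
    have hae : a - e = d := by rw [ha, he, hd]; abel
    have hsplit : ∀ x : E, ⟪x, a⟫_ℝ = ⟪x, e⟫_ℝ + ⟪x, d⟫_ℝ := fun x => by
      rw [← ha_ed, inner_add_right]
    have hinner_ea : 2 * (c * ⟪e, a⟫_ℝ) = c * (‖a‖^2 + ‖e‖^2 - ‖d‖^2) := by
      have hns : ‖a - e‖^2 = ‖a‖^2 - 2 * ⟪a, e⟫_ℝ + ‖e‖^2 := norm_sub_sq_real a e
      rw [hae] at hns
      have hc1 : ⟪e, a⟫_ℝ = ⟪a, e⟫_ℝ := real_inner_comm _ _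
      rw [hc1]
      linear_combination c * hns
    -- expansion of the inner product with Vk
    have EQ1 : 2 * ⟪Vk, a⟫_ℝ = 2 * ⟪gradient (F k) (u k), a⟫_ℝ
        - 2 * ⟪gradient (F k) wt, e⟫_ℝ - 2 * ⟪gradient (F k) wt, d⟫_ℝ
        + 2 * ⟪z, e⟫_ℝ + 2 * ⟪z, d⟫_ℝ + c * (‖a‖^2 + ‖e‖^2 - ‖d‖^2) := by
      rw [hVk, inner_add_left, inner_add_left, inner_sub_left, real_inner_smul_left,
        hsplit (gradient (F k) wt), hsplit z]
      linear_combination hinner_ea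
    -- strong convexity at the two base points
    have h1 := hsc k wstar (u k)
    have e1 : wstar - u k = -a := by rw [ha]; abel
    rw [e1, inner_neg_right, norm_neg] at h1
    have h2 := hsc k (u k) wt
    rw [← he] at h2
    -- quadratic identities
    have EQ2 : μ * ‖e‖^2 = μ * ‖a‖^2 - 2 * (μ * ⟪a, d⟫_ℝ) + μ * ‖d‖^2 := by
      have hns : ‖a - d‖^2 = ‖a‖^2 - 2 * ⟪a, d⟫_ℝ + ‖d‖^2 := norm_sub_sq_real a d
      rw [had] at hns
      linear_combination μ * hns
    have EQ3 : 2 * ⟪zb, e⟫_ℝ = 2 * ⟪z, e⟫_ℝ - 2 * (μ * ⟪d, e⟫_ℝ) := by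
      rw [hzb, inner_sub_left, real_inner_smul_left]
      ring
    have EQ4 : μ * ⟪d, e⟫_ℝ = μ * ⟪a, d⟫_ℝ - μ * ‖d‖^2 := by
      have hde : ⟪d, e⟫_ℝ = ⟪d, a⟫_ℝ - ⟪d, d⟫_ℝ := by rw [← had, inner_sub_right]
      have hc2 : ⟪d, a⟫_ℝ = ⟪a, d⟫_ℝ := real_inner_comm _ _
      have hdd : ⟪d, d⟫_ℝ = ‖d‖^2 := real_inner_self_eq_norm_sq _
      rw [hc2, hdd] at hde
      linear_combination μ * hde
    have EQ5 : ⟪z - gradient (F k) wt, d⟫_ℝ = ⟪z, d⟫_ℝ - ⟪gradient (F k) wt, d⟫_ℝ :=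
      inner_sub_left _ _ _
    -- the inner product lower bound
    have hip : (2*μ + c) * ‖a‖^2 - c * ‖d‖^2
        + ((c * ‖e‖^2 + 2 * ⟪zb, e⟫_ℝ + (2 * (F k wt - F k wstar) - μ * ‖d‖^2))
          + 2 * ⟪z - gradient (F k) wt, d⟫_ℝ)
        ≤ 2 * ⟪Vk, a⟫_ℝ := by
      linarith [EQ1, h1, h2, EQ2, EQ3, EQ4, EQ5]
    -- second moment bound
    have hSi : ∀ i ∈ D k, ‖gradient (f i) (u k) - gradient (f i) wt + z + c • e‖^2
        ≤ 3*(L^2 + c^2) * ‖e‖^2 + 3*L^2 * ‖d‖^2 := by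
      intro i _
      have htri : ‖gradient (f i) (u k) - gradient (f i) wt + z + c • e‖
          ≤ L * ‖e‖ + L * ‖d‖ + c * ‖e‖ := by
        calc ‖gradient (f i) (u k) - gradient (f i) wt + z + c • e‖
            ≤ ‖gradient (f i) (u k) - gradient (f i) wt‖ + ‖z‖ + ‖c • e‖ :=
              norm_add₃_le
          _ ≤ L * ‖e‖ + L * ‖d‖ + c * ‖e‖ := by
              have hb1 : ‖gradient (f i) (u k) - gradient (f i) wt‖ ≤ L * ‖e‖ := by
                rw [he]; exact hL i (u k) wt
              have hb3 : ‖c • e‖ = c * ‖e‖ := by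
                rw [norm_smul, Real.norm_eq_abs, abs_of_pos hc0]
              linarith [hb1, hznorm, le_of_eq hb3]
      have hsq := pow_le_pow_left₀ (norm_nonneg _) htri 2
      nlinarith [hsq, sq_nonneg (L*‖e‖ - L*‖d‖), sq_nonneg (L*‖e‖ - c*‖e‖),
        sq_nonneg (L*‖d‖ - c*‖e‖)]
    have hSsum : ∑ i ∈ D k, ‖gradient (f i) (u k) - gradient (f i) wt + z + c • e‖^2
        ≤ (q:ℝ) * (3*(L^2 + c^2) * ‖e‖^2 + 3*L^2 * ‖d‖^2) := by
      calc ∑ i ∈ D k, ‖gradient (f i) (u k) - gradient (f i) wt + z + c • e‖^2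
          ≤ ∑ _i ∈ D k, (3*(L^2 + c^2) * ‖e‖^2 + 3*L^2 * ‖d‖^2) := Finset.sum_le_sum hSi
        _ = (q:ℝ) * (3*(L^2 + c^2) * ‖e‖^2 + 3*L^2 * ‖d‖^2) := by
            rw [Finset.sum_const, hcard k, nsmul_eq_mul]
    -- per-i expansion of the squared distance
    have hexp : ∀ i ∈ D k,
        ‖u k - η • (gradient (f i) (u k) - gradient (f i) wt + z + c • e) - wstar‖^2
        = ‖a‖^2 - 2*η*⟪gradient (f i) (u k) - gradient (f i) wt + z + c • e, a⟫_ℝ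
          + η^2 * ‖gradient (f i) (u k) - gradient (f i) wt + z + c • e‖^2 := by
      intro i _
      have hre : u k - η • (gradient (f i) (u k) - gradient (f i) wt + z + c • e) - wstar
          = a - η • (gradient (f i) (u k) - gradient (f i) wt + z + c • e) := by
        rw [ha]; exact sub_right_comm _ _ _
      have hc3 : ⟪a, gradient (f i) (u k) - gradient (f i) wt + z + c • e⟫_ℝ
          = ⟪gradient (f i) (u k) - gradient (f i) wt + z + c • e, a⟫_ℝ :=
        real_inner_comm _ _
      rw [hre, norm_sub_sq_real, real_inner_smul_right, norm_smul, Real.norm_eq_abs,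
        mul_pow, sq_abs, hc3]
      ring
    have hexp_sum : ∑ i ∈ D k,
        ‖u k - η • (gradient (f i) (u k) - gradient (f i) wt + z + c • e) - wstar‖^2
        = (q:ℝ)*‖a‖^2 - 2*η*((q:ℝ)*⟪Vk, a⟫_ℝ)
          + η^2 * ∑ i ∈ D k, ‖gradient (f i) (u k) - gradient (f i) wt + z + c • e‖^2 := by
      rw [Finset.sum_congr rfl hexp, Finset.sum_add_distrib, Finset.sum_sub_distrib,
        Finset.sum_const, hcard k, nsmul_eq_mul, ← Finset.mul_sum, ← Finset.mul_sum,
        hsum_inner]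
    have hfinal_eq : (1/q:ℝ) * ∑ i ∈ D k,
        ‖u k - η • (gradient (f i) (u k) - gradient (f i) wt + z + c • e) - wstar‖^2
        = ‖a‖^2 - 2*η*⟪Vk, a⟫_ℝ
          + η^2 * ((1/q:ℝ) * ∑ i ∈ D k,
              ‖gradient (f i) (u k) - gradient (f i) wt + z + c • e‖^2) := by
      rw [hexp_sum]
      field_simp
    have hSq : (1/q:ℝ) * ∑ i ∈ D k,
        ‖gradient (f i) (u k) - gradient (f i) wt + z + c • e‖^2
        ≤ 3*(L^2 + c^2) * ‖e‖^2 + 3*L^2 * ‖d‖^2 := by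
      calc (1/q:ℝ) * ∑ i ∈ D k, ‖gradient (f i) (u k) - gradient (f i) wt + z + c • e‖^2
          ≤ (1/q:ℝ) * ((q:ℝ) * (3*(L^2 + c^2) * ‖e‖^2 + 3*L^2 * ‖d‖^2)) := by
            apply mul_le_mul_of_nonneg_left hSsum (by positivity)
        _ = 3*(L^2 + c^2) * ‖e‖^2 + 3*L^2 * ‖d‖^2 := by field_simp
    have hη3 : η * (3*(L^2 + c^2)) ≤ c - s := by
      have h3pos : (0:ℝ) < 3*(L^2 + c^2) := by positivity
      have := (le_div_iff₀ h3pos).mp hη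
      rw [hsdef]
      linarith
    have hquad : η^2 * (3*(L^2 + c^2) * ‖e‖^2) ≤ η * ((c - s) * ‖e‖^2) := by
      have h1 : η * (3*(L^2 + c^2)) * ‖e‖^2 ≤ (c - s) * ‖e‖^2 :=
        mul_le_mul_of_nonneg_right hη3 (sq_nonneg _)
      have h2 := mul_le_mul_of_nonneg_left h1 hη0.le
      have h3 : η^2 * (3*(L^2 + c^2)*‖e‖^2) = η * (η * (3*(L^2 + c^2)) * ‖e‖^2) := by ring
      rw [h3]
      exact h2
    have hip' := mul_le_mul_of_nonneg_left hip hη0.le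
    have hSq' := mul_le_mul_of_nonneg_left hSq (sq_nonneg η)
    clear_value a e Vk s d zb ρ
    rw [hfinal_eq]
    linarith [hip', hSq', hquad]
  -- nonnegativity of the per-k residual (without the telescoping part)
  have hpos : ∀ k : Fin p, 0 ≤ s * ‖u k - wt‖^2 + 2*⟪zb, u k - wt⟫_ℝ + ρ := by
    intro k
    have hcs : |⟪zb, u k - wt⟫_ℝ| ≤ ‖zb‖ * ‖u k - wt‖ := abs_real_inner_le_norm _ _
    have hcs' : -(‖zb‖ * ‖u k - wt‖) ≤ ⟪zb, u k - wt⟫_ℝ := by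
      have := neg_abs_le ⟪zb, u k - wt⟫_ℝ
      linarith
    rcases eq_or_lt_of_le hs0 with hs' | hs'
    · have hZ0 : ‖zb‖^2 ≤ 0 := by
        have : s * ρ = 0 := by rw [← hs', zero_mul]
        linarith [hcoco]
      have hzb0 : zb = 0 := norm_eq_zero.mp (by nlinarith [norm_nonneg zb])
      rw [hzb0, inner_zero_left]
      have := mul_nonneg hs0 (sq_nonneg ‖u k - wt‖)
      linarith
    · have hsτ := mul_le_mul_of_nonneg_left hcs' hs'.le
      have key : 0 ≤ s * (s * ‖u k - wt‖^2 + 2*⟪zb, u k - wt⟫_ℝ + ρ) := by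
        nlinarith [sq_nonneg (s * ‖u k - wt‖ - ‖zb‖), hcoco, hsτ]
      nlinarith [key, hs']
  -- telescoping sums
  have hCsum : ∑ k, ⟪z - gradient (F k) wt, d⟫_ℝ = 0 := by
    rw [← sum_inner]
    have hzero : ∑ k : Fin p, (z - gradient (F k) wt) = 0 := by
      rw [Finset.sum_sub_distrib, Finset.sum_const, hgradFsum wt, ← hz, Finset.card_univ,
        Fintype.card_fin, ← Nat.cast_smul_eq_nsmul ℝ]
      exact sub_self _
    rw [hzero, inner_zero_left]
  have hρsum : ∑ k : Fin p, (2 * (F k wt - F k wstar) - μ * ‖d‖^2) = (p:ℝ) * ρ := by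
    rw [Finset.sum_sub_distrib, Finset.sum_const, Finset.card_univ, Fintype.card_fin,
      nsmul_eq_mul, ← Finset.mul_sum, Finset.sum_sub_distrib, hFsum, hFsum, hρ]
    ring
  -- the total residual is nonnegative
  have hT0 : 0 ≤ ∑ k : Fin p, ((s * ‖u k - wt‖^2 + 2*⟪zb, u k - wt⟫_ℝ
      + (2 * (F k wt - F k wstar) - μ * ‖d‖^2)) + 2*⟪z - gradient (F k) wt, d⟫_ℝ) := by
    have h1 : ∑ k : Fin p, ((s * ‖u k - wt‖^2 + 2*⟪zb, u k - wt⟫_ℝ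
        + (2 * (F k wt - F k wstar) - μ * ‖d‖^2)) + 2*⟪z - gradient (F k) wt, d⟫_ℝ)
        = ∑ k : Fin p, (s * ‖u k - wt‖^2 + 2*⟪zb, u k - wt⟫_ℝ + ρ) := by
      rw [Finset.sum_add_distrib, Finset.sum_add_distrib, ← Finset.mul_sum, hCsum, hρsum]
      rw [Finset.sum_add_distrib (s := Finset.univ)
        (f := fun k : Fin p => s * ‖u k - wt‖^2 + 2*⟪zb, u k - wt⟫_ℝ) (g := fun _ => ρ),
        Finset.sum_const, Finset.card_univ, Fintype.card_fin, nsmul_eq_mul]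
      ring
    rw [h1]
    exact Finset.sum_nonneg (fun k _ => hpos k)
  -- conclude
  have hsum_bound : ∑ k : Fin p, ((1 - η * (2 * μ + c)) * ‖u k - wstar‖ ^ 2
        + (c * η + 3 * L ^ 2 * η ^ 2) * ‖d‖ ^ 2
        - η * ((s * ‖u k - wt‖ ^ 2 + 2 * ⟪zb, u k - wt⟫_ℝ
              + (2 * (F k wt - F k wstar) - μ * ‖d‖ ^ 2))
            + 2 * ⟪z - gradient (F k) wt, d⟫_ℝ))
      ≤ (1 - η * (2 * μ + c)) * (∑ k : Fin p, ‖u k - wstar‖ ^ 2)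
        + (p:ℝ) * ((c * η + 3 * L ^ 2 * η ^ 2) * ‖d‖ ^ 2) := by
    rw [Finset.sum_sub_distrib, Finset.sum_add_distrib, ← Finset.mul_sum, ← Finset.mul_sum,
      ← Finset.mul_sum, Finset.sum_const, Finset.card_univ, Fintype.card_fin, nsmul_eq_mul]
    have := mul_nonneg hη0.le hT0
    linarith
  calc (1 / p : ℝ) * ∑ k, (1 / q : ℝ) * ∑ i ∈ D k,
        ‖u k - η • (gradient (f i) (u k) - gradient (f i) wt + z
            + c • (u k - wt)) - wstar‖ ^ 2
      ≤ (1 / p : ℝ) * ∑ k : Fin p, ((1 - η * (2 * μ + c)) * ‖u k - wstar‖ ^ 2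
          + (c * η + 3 * L ^ 2 * η ^ 2) * ‖d‖ ^ 2
          - η * ((s * ‖u k - wt‖ ^ 2 + 2 * ⟪zb, u k - wt⟫_ℝ
                + (2 * (F k wt - F k wstar) - μ * ‖d‖ ^ 2))
              + 2 * ⟪z - gradient (F k) wt, d⟫_ℝ)) := by
        apply mul_le_mul_of_nonneg_left (Finset.sum_le_sum (fun k _ => hkey k)) (by positivity)
    _ ≤ (1 / p : ℝ) * ((1 - η * (2 * μ + c)) * (∑ k : Fin p, ‖u k - wstar‖ ^ 2)
          + (p:ℝ) * ((c * η + 3 * L ^ 2 * η ^ 2) * ‖d‖ ^ 2)) := by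
        apply mul_le_mul_of_nonneg_left hsum_bound (by positivity)
    _ = (1 - η * (2 * μ + c)) * ((1 / p : ℝ) * ∑ k, ‖u k - wstar‖ ^ 2)
          + (c * η + 3 * L ^ 2 * η ^ 2) * ‖d‖ ^ 2 := by
        field_simp
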